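/- arXiv:1507.02935 — 3 statements merged into one kernel-verified Lean document; each statement's English description precedes it below -/
import Mathlib

section
/- For i.i.d. Bernoulli(p) trials with 0<p<1 and λ = ln(1/p), lim_{n→∞} (1/log_{1/p} n) ln E[exp(λ L(n))] = 2λ (critical Laplace asymptotics). -/
open MeasureTheory ProbabilityTheory Filter Set
open scoped ENNReal Classical

/-- The longest run of `true`s among the first `n` trials `X 0, ..., X (n-1)`. -/
noncomputable def longestRun (X : ℕ → Bool) (n : ℕ) : ℕ :=
  (Finset.range (n + 1)).sup fun ℓ =>
    if ∃ i, i + ℓ ≤ n ∧ ∀ j < ℓ, X (i + j) = true then ℓ else 0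

section auxLemmas
set_option linter.unusedSectionVars false

lemma longestRun_le (X : ℕ → Bool) (n : ℕ) : longestRun X n ≤ n := by
  apply Finset.sup_le
  intro ℓ hℓ
  simp only [Finset.mem_range] at hℓ
  split <;> omega

lemma le_longestRun {X : ℕ → Bool} {n k i : ℕ} (hik : i + k ≤ n)
    (h : ∀ j < k, X (i + j) = true) : k ≤ longestRun X n := by
  have hk : k ∈ Finset.range (n + 1) := by simp; omega
  have := Finset.le_sup (f := fun ℓ =>
    if ∃ i, i + ℓ ≤ n ∧ ∀ j < ℓ, X (i + j) = true then ℓ else 0) hk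
  have h2 : (if ∃ i, i + k ≤ n ∧ ∀ j < k, X (i + j) = true then k else 0) = k :=
    if_pos ⟨i, hik, h⟩
  exact le_of_eq_of_le h2.symm this

lemma exists_of_le_longestRun {X : ℕ → Bool} {n k : ℕ} (hk1 : 1 ≤ k)
    (hk : k ≤ longestRun X n) :
    ∃ i, i + k ≤ n ∧ ∀ j < k, X (i + j) = true := by
  unfold longestRun at hk
  rw [Finset.le_sup_iff (by simp; omega : (⊥ : ℕ) < k)] at hk
  obtain ⟨ℓ, -, hℓ⟩ := hk
  by_cases hcond : ∃ i, i + ℓ ≤ n ∧ ∀ j < ℓ, X (i + j) = true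
  · obtain ⟨i, hin, hrun⟩ := hcond
    rw [if_pos ⟨i, hin, hrun⟩] at hℓ
    exact ⟨i, by omega, fun j hj => hrun j (by omega)⟩
  · rw [if_neg hcond] at hℓ; omega

section bonf
variable {Ω : Type*} [MeasurableSpace Ω]

lemma bonferroni (μ : Measure Ω) (A : ℕ → Set Ω) (hA : ∀ i, MeasurableSet (A i)) (m : ℕ) :
    ∑ i ∈ Finset.range m, μ (A i) ≤
      μ (⋃ i ∈ Finset.range m, A i) +
        ∑ i ∈ Finset.range m, ∑ j ∈ Finset.range i, μ (A i ∩ A j) := by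
  induction m with
  | zero => simp
  | succ m ih =>
    rw [Finset.sum_range_succ, Finset.sum_range_succ (f := fun i => ∑ j ∈ Finset.range i, μ (A i ∩ A j))]
    have hU : (⋃ i ∈ Finset.range (m+1), A i) = (⋃ i ∈ Finset.range m, A i) ∪ A m := by
      rw [Finset.range_add_one]
      simp [Set.union_comm]
    have key : μ (⋃ i ∈ Finset.range m, A i) + μ (A m)
        ≤ μ (⋃ i ∈ Finset.range (m+1), A i) + ∑ j ∈ Finset.range m, μ (A m ∩ A j) := by
      rw [← measure_union_add_inter _ (hA m), hU]
      gcongr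
      have : (⋃ i ∈ Finset.range m, A i) ∩ A m = ⋃ j ∈ Finset.range m, (A m ∩ A j) := by
        rw [Set.iUnion₂_inter]
        simp [Set.inter_comm]
      rw [this]
      exact measure_biUnion_finset_le _ _
    calc ∑ i ∈ Finset.range m, μ (A i) + μ (A m)
        ≤ (μ (⋃ i ∈ Finset.range m, A i) +
            ∑ i ∈ Finset.range m, ∑ j ∈ Finset.range i, μ (A i ∩ A j)) + μ (A m) := by gcongr
      _ = (μ (⋃ i ∈ Finset.range m, A i) + μ (A m)) +
            ∑ i ∈ Finset.range m, ∑ j ∈ Finset.range i, μ (A i ∩ A j) := by ring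
      _ ≤ (μ (⋃ i ∈ Finset.range (m+1), A i) + ∑ j ∈ Finset.range m, μ (A m ∩ A j)) +
            ∑ i ∈ Finset.range m, ∑ j ∈ Finset.range i, μ (A i ∩ A j) := by gcongr
      _ = μ (⋃ i ∈ Finset.range (m+1), A i) +
            (∑ i ∈ Finset.range m, ∑ j ∈ Finset.range i, μ (A i ∩ A j) +
              ∑ j ∈ Finset.range m, μ (A m ∩ A j)) := by ring


end bonf

variable {Ω : Type*} [MeasurableSpace Ω] (μ : Measure Ω) [IsProbabilityMeasure μ]
    (X : ℕ → Ω → Bool) (p : ℝ)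

lemma measurableSet_run (X : ℕ → Ω → Bool) (hmeas : ∀ i, Measurable (X i)) (n ℓ : ℕ) :
    MeasurableSet {ω : Ω | ∃ i, i + ℓ ≤ n ∧ ∀ j < ℓ, X (i + j) ω = true} := by
  have : {ω : Ω | ∃ i, i + ℓ ≤ n ∧ ∀ j < ℓ, X (i + j) ω = true}
      = ⋃ i, ⋃ (_ : i + ℓ ≤ n), ⋂ j, ⋂ (_ : j < ℓ), (X (i + j)) ⁻¹' {true} := by
    ext ω; simp [Set.mem_iUnion, Set.mem_iInter]
  rw [this]
  exact MeasurableSet.iUnion fun i => MeasurableSet.iUnion fun _ =>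
    MeasurableSet.iInter fun j => MeasurableSet.iInter fun _ =>
      (hmeas (i + j)) (measurableSet_singleton true)

lemma measurable_longestRun (X : ℕ → Ω → Bool) (hmeas : ∀ i, Measurable (X i)) (n : ℕ) :
    Measurable fun ω => longestRun (fun i => X i ω) n := by
  unfold longestRun
  induction (Finset.range (n+1)) using Finset.induction with
  | empty => simpa using measurable_const
  | @insert a s ha ih =>
    simp only [Finset.sup_insert]
    exact Measurable.sup
      (Measurable.ite (measurableSet_run X hmeas n a) measurable_const measurable_const) ih


section events
variable (hp0 : 0 < p) (hp1 : p < 1) (hmeas : ∀ i, Measurable (X i))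
    (hindep : iIndepFun X μ)
    (hdist : ∀ i, μ {ω | X i ω = true} = ENNReal.ofReal p)

include hindep in
lemma meas_biInter_bool (S : Finset ℕ) (b : ℕ → Bool) :
    μ (⋂ i ∈ S, X i ⁻¹' {b i}) = ∏ i ∈ S, μ (X i ⁻¹' {b i}) :=
  hindep.measure_inter_preimage_eq_mul S (fun i _ => measurableSet_singleton (b i))

include hdist in
lemma meas_true (i : ℕ) : μ (X i ⁻¹' {true}) = ENNReal.ofReal p := by
  rw [show X i ⁻¹' {true} = {ω | X i ω = true} from by ext ω; simp]
  exact hdist i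

include hp0 hp1 hmeas hdist in
lemma meas_false (i : ℕ) : μ (X i ⁻¹' {false}) = ENNReal.ofReal (1 - p) := by
  have hc : X i ⁻¹' {false} = (X i ⁻¹' {true})ᶜ := by
    ext ω; cases h : X i ω <;> simp [h]
  rw [hc, measure_compl ((hmeas i) (measurableSet_singleton true)) (measure_ne_top μ _),
    meas_true μ X p hdist i, measure_univ, ENNReal.ofReal_sub 1 hp0.le, ENNReal.ofReal_one]


include hindep hdist in
lemma meas_run (i t : ℕ) :
    μ (⋂ m ∈ Finset.Ico i (i + t), X m ⁻¹' {true}) = ENNReal.ofReal p ^ t := by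
  rw [meas_biInter_bool μ X hindep _ (fun _ => true)]
  rw [Finset.prod_congr rfl (fun m _ => meas_true μ X p hdist m), Finset.prod_const,
    Nat.card_Ico]
  congr 1
  omega

/-- the event: a failure at `i` followed by a success run of length `t`. -/
def runEvent (i t : ℕ) : Set Ω :=
  X i ⁻¹' {false} ∩ ⋂ m ∈ Finset.Ico (i + 1) (i + 1 + t), X m ⁻¹' {true}

include hp0 hp1 hmeas hindep hdist in
lemma meas_runEvent (i t : ℕ) :
    μ (runEvent X i t) = ENNReal.ofReal (1 - p) * ENNReal.ofReal p ^ t := by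
  classical
  set b : ℕ → Bool := fun m => if m = i then false else true with hb
  have hnotmem : i ∉ Finset.Ico (i + 1) (i + 1 + t) := by simp
  have hev : runEvent X i t = ⋂ m ∈ insert i (Finset.Ico (i + 1) (i + 1 + t)), X m ⁻¹' {b m} := by
    rw [Finset.set_biInter_insert]
    unfold runEvent
    congr 1
    · simp [hb]
    · apply Set.iInter₂_congr
      intro m hm
      have : m ≠ i := by simp at hm; omega
      simp [hb, this]
  rw [hev, meas_biInter_bool μ X hindep _ b, Finset.prod_insert hnotmem]
  have h1 : μ (X i ⁻¹' {b i}) = ENNReal.ofReal (1 - p) := by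
    simp only [hb, if_pos rfl]
    exact meas_false μ X p hp0 hp1 hmeas hdist i
  have h2 : ∀ m ∈ Finset.Ico (i + 1) (i + 1 + t), μ (X m ⁻¹' {b m}) = ENNReal.ofReal p := by
    intro m hm
    have : m ≠ i := by simp at hm; omega
    simp only [hb, if_neg this]
    exact meas_true μ X p hdist m
  rw [h1, Finset.prod_congr rfl h2, Finset.prod_const, Nat.card_Ico]
  congr 2
  omega

lemma runEvent_inter_close {i j t : ℕ} (hij : i < j) (hji : j ≤ i + t) :
    runEvent X i t ∩ runEvent X j t = ∅ := by
  ext ω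
  simp only [Set.mem_inter_iff, Set.mem_empty_iff_false, iff_false]
  rintro ⟨⟨-, hi⟩, hj, -⟩
  have hmem : j ∈ Finset.Ico (i + 1) (i + 1 + t) := by simp; omega
  have h1 : ω ∈ X j ⁻¹' {true} := by
    have := Set.mem_iInter₂.1 hi j hmem
    exact this
  simp only [Set.mem_preimage, Set.mem_singleton_iff] at h1 hj
  rw [h1] at hj
  exact Bool.noConfusion hj

include hindep hdist in
lemma meas_runEvent_inter_far {i j t : ℕ} (h : i + t < j) :
    μ (runEvent X i t ∩ runEvent X j t) ≤ ENNReal.ofReal p ^ (2 * t) := by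
  have hsub : runEvent X i t ∩ runEvent X j t ⊆
      ⋂ m ∈ (Finset.Ico (i + 1) (i + 1 + t) ∪ Finset.Ico (j + 1) (j + 1 + t)),
        X m ⁻¹' {true} := by
    rintro ω ⟨⟨-, hi⟩, -, hj⟩
    apply Set.mem_iInter₂.2
    intro m hm
    rcases Finset.mem_union.1 hm with hm | hm
    · exact Set.mem_iInter₂.1 hi m hm
    · exact Set.mem_iInter₂.1 hj m hm
  refine (measure_mono hsub).trans ?_
  rw [meas_biInter_bool μ X hindep _ (fun _ => true)]
  rw [Finset.prod_congr rfl (fun m _ => meas_true μ X p hdist m), Finset.prod_const]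
  have hdisj : Disjoint (Finset.Ico (i + 1) (i + 1 + t)) (Finset.Ico (j + 1) (j + 1 + t)) := by
    rw [Finset.disjoint_left]
    intro m hm hm'
    simp only [Finset.mem_Ico] at hm hm'
    omega
  have hcard : (Finset.Ico (i + 1) (i + 1 + t) ∪ Finset.Ico (j + 1) (j + 1 + t)).card = 2 * t := by
    rw [Finset.card_union_of_disjoint hdisj, Nat.card_Ico, Nat.card_Ico]
    omega
  rw [hcard]

include hindep hdist in
lemma prob_upper (n t : ℕ) (ht : 1 ≤ t) :
    μ {ω | t ≤ longestRun (fun i => X i ω) n} ≤ (n + 1) * ENNReal.ofReal p ^ t := by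
  have hsub : {ω : Ω | t ≤ longestRun (fun i => X i ω) n} ⊆
      ⋃ i ∈ Finset.range (n + 1), ⋂ m ∈ Finset.Ico i (i + t), X m ⁻¹' {true} := by
    intro ω hω
    obtain ⟨i, hin, hrun⟩ := exists_of_le_longestRun ht hω
    refine Set.mem_biUnion (by simp; omega : i ∈ Finset.range (n + 1)) ?_
    apply Set.mem_iInter₂.2
    intro m hm
    simp only [Finset.mem_Ico] at hm
    have h2 := hrun (m - i) (by omega)
    simp only [Set.mem_preimage, Set.mem_singleton_iff]
    rwa [show i + (m - i) = m by omega] at h2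
  refine (measure_mono hsub).trans ((measure_biUnion_finset_le _ _).trans ?_)
  rw [Finset.sum_congr rfl (fun i _ => meas_run μ X p hindep hdist i t), Finset.sum_const,
    Finset.card_range, nsmul_eq_mul]
  simp

include hp0 hp1 hmeas hindep hdist in
lemma prob_lower (n t : ℕ) (ht : 1 ≤ t) :
    ((n - t : ℕ) : ℝ≥0∞) * (ENNReal.ofReal (1 - p) * ENNReal.ofReal p ^ t) ≤
      μ {ω | t ≤ longestRun (fun i => X i ω) n} +
        (n : ℝ≥0∞) ^ 2 * ENNReal.ofReal p ^ (2 * t) := by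
  set m := n - t with hm
  have hmeasA : ∀ i, MeasurableSet (runEvent X i t) := by
    intro i
    exact ((hmeas i) (measurableSet_singleton false)).inter
      (MeasurableSet.biInter (Finset.Ico (i+1) (i+1+t)).countable_toSet
        fun k _ => (hmeas k) (measurableSet_singleton true))
  have hbon := bonferroni μ (fun i => runEvent X i t) hmeasA m
  have hsingles : ∑ i ∈ Finset.range m, μ (runEvent X i t)
      = (m : ℝ≥0∞) * (ENNReal.ofReal (1 - p) * ENNReal.ofReal p ^ t) := by
    rw [Finset.sum_congr rfl (fun i _ => meas_runEvent μ X p hp0 hp1 hmeas hindep hdist i t), Finset.sum_const,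
      Finset.card_range, nsmul_eq_mul]
  have hunion : μ (⋃ i ∈ Finset.range m, runEvent X i t)
      ≤ μ {ω | t ≤ longestRun (fun i => X i ω) n} := by
    apply measure_mono
    intro ω hω
    obtain ⟨i, hi, hωi⟩ := Set.mem_iUnion₂.1 hω
    simp only [Finset.mem_range] at hi
    obtain ⟨-, hrun⟩ := hωi
    simp only [Set.mem_setOf_eq]
    apply le_longestRun (i := i + 1) (by omega)
    intro j hj
    have := Set.mem_iInter₂.1 hrun (i + 1 + j) (by simp; omega)
    simpa using this
  have hpairs : ∑ i ∈ Finset.range m, ∑ j ∈ Finset.range i,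
      μ (runEvent X i t ∩ runEvent X j t) ≤ (n : ℝ≥0∞) ^ 2 * ENNReal.ofReal p ^ (2 * t) := by
    have hterm : ∀ i ∈ Finset.range m, ∀ j ∈ Finset.range i,
        μ (runEvent X i t ∩ runEvent X j t) ≤ ENNReal.ofReal p ^ (2 * t) := by
      intro i _ j hj
      simp only [Finset.mem_range] at hj
      rcases le_or_gt i (j + t) with hc | hc
      · rw [Set.inter_comm, runEvent_inter_close X hj hc]
        simp
      · rw [Set.inter_comm]
        exact meas_runEvent_inter_far μ X p hindep hdist hc
    calc ∑ i ∈ Finset.range m, ∑ j ∈ Finset.range i,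
        μ (runEvent X i t ∩ runEvent X j t)
        ≤ ∑ i ∈ Finset.range m, ∑ j ∈ Finset.range i, ENNReal.ofReal p ^ (2 * t) := by
          apply Finset.sum_le_sum
          intro i hi
          exact Finset.sum_le_sum (hterm i hi)
      _ = ∑ i ∈ Finset.range m, (i : ℝ≥0∞) * ENNReal.ofReal p ^ (2 * t) := by
          simp [Finset.sum_const, nsmul_eq_mul]
      _ ≤ ∑ i ∈ Finset.range m, (n : ℝ≥0∞) * ENNReal.ofReal p ^ (2 * t) := by
          apply Finset.sum_le_sum
          intro i hi
          gcongr
          simp only [Finset.mem_range] at hi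
          exact_mod_cast Nat.cast_le.2 (by omega)
      _ ≤ (n : ℝ≥0∞) ^ 2 * ENNReal.ofReal p ^ (2 * t) := by
          rw [Finset.sum_const, Finset.card_range, nsmul_eq_mul, pow_two, ← mul_assoc]
          gcongr
          exact_mod_cast Nat.cast_le.2 (Nat.sub_le n t)
  calc (m : ℝ≥0∞) * (ENNReal.ofReal (1 - p) * ENNReal.ofReal p ^ t)
      = ∑ i ∈ Finset.range m, μ (runEvent X i t) := hsingles.symm
    _ ≤ μ (⋃ i ∈ Finset.range m, runEvent X i t) +
        ∑ i ∈ Finset.range m, ∑ j ∈ Finset.range i,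
          μ (runEvent X i t ∩ runEvent X j t) := hbon
    _ ≤ _ := add_le_add hunion hpairs
include hmeas in
lemma measurableSet_good (n t : ℕ) :
    MeasurableSet {ω : Ω | t ≤ longestRun (fun i => X i ω) n} :=
  measurable_longestRun X hmeas n measurableSet_Ici

include hp0 hmeas in
lemma integral_exp_eq (n : ℕ) :
    ∫ ω, Real.exp (Real.log (1 / p) * (longestRun (fun i => X i ω) n : ℝ)) ∂μ
      = 1 + ∑ k ∈ Finset.range n, ((1 / p) ^ (k + 1) - (1 / p) ^ k) *
          (μ {ω | k + 1 ≤ longestRun (fun i => X i ω) n}).toReal := by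
  have hq : (0 : ℝ) < 1 / p := by positivity
  set q : ℝ := 1 / p with hqdef
  set L : Ω → ℕ := fun ω => longestRun (fun i => X i ω) n with hL
  have hpt : ∀ ω, Real.exp (Real.log q * (L ω : ℝ))
      = 1 + ∑ k ∈ Finset.range n, ((q ^ (k + 1) - q ^ k) *
          Set.indicator {ω | k + 1 ≤ L ω} (fun _ => (1 : ℝ)) ω) := by
    intro ω
    have h1 : Real.exp (Real.log q * (L ω : ℝ)) = q ^ L ω := by
      rw [mul_comm, Real.exp_nat_mul, Real.exp_log hq]
    have h2 : ∑ k ∈ Finset.range n, ((q ^ (k + 1) - q ^ k) *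
        Set.indicator {ω | k + 1 ≤ L ω} (fun _ => (1 : ℝ)) ω)
        = ∑ k ∈ Finset.range (L ω), (q ^ (k + 1) - q ^ k) := by
      rw [← Finset.sum_subset (Finset.range_subset_range.2 (longestRun_le (fun i => X i ω) n))]
      · apply Finset.sum_congr rfl
        intro k hk
        simp only [Finset.mem_range] at hk
        rw [Set.indicator_of_mem (by simpa using hk), mul_one]
      · intro k _ hk
        simp only [Finset.mem_range, not_lt] at hk
        rw [Set.indicator_of_notMem (by simp only [Set.mem_setOf_eq, not_le]; exact Nat.lt_succ_of_le hk), mul_zero]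
    rw [h1, h2, Finset.sum_range_sub (fun k => q ^ k)]
    ring
  calc ∫ ω, Real.exp (Real.log q * (L ω : ℝ)) ∂μ
      = ∫ ω, (1 + ∑ k ∈ Finset.range n, ((q ^ (k + 1) - q ^ k) *
          Set.indicator {ω | k + 1 ≤ L ω} (fun _ => (1 : ℝ)) ω)) ∂μ := by
        exact integral_congr_ae (Filter.Eventually.of_forall hpt)
    _ = 1 + ∑ k ∈ Finset.range n, ((q ^ (k + 1) - q ^ k) *
          (μ {ω | k + 1 ≤ L ω}).toReal) := by
        rw [integral_add (integrable_const 1)]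
        · congr 1
          · simp
          rw [integral_finset_sum]
          · apply Finset.sum_congr rfl
            intro k _
            rw [MeasureTheory.integral_const_mul, MeasureTheory.integral_indicator_const (1 : ℝ)
              (measurableSet_good X hmeas n (k + 1)), smul_eq_mul, mul_one, measureReal_def]
          · intro k _
            exact ((integrable_const (1 : ℝ)).indicator
              (measurableSet_good X hmeas n (k + 1))).const_mul _
        · apply integrable_finset_sum
          intro k _
          exact ((integrable_const (1 : ℝ)).indicator
            (measurableSet_good X hmeas n (k + 1))).const_mul _

include hp0 hp1 in
lemma csum_nonneg (n : ℕ) : ∀ k ∈ Finset.range n, 0 ≤ ((1 / p) ^ (k + 1) - (1 / p) ^ k) *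
    (μ {ω | k + 1 ≤ longestRun (fun i => X i ω) n}).toReal := by
  intro k _
  apply mul_nonneg _ ENNReal.toReal_nonneg
  have hq1 : (1:ℝ) ≤ 1 / p := by rw [le_div_iff₀ hp0]; linarith
  have h3 : (1 / p) ^ k ≤ (1 / p) ^ (k + 1) := pow_le_pow_right₀ hq1 (Nat.le_succ k)
  linarith

include hp0 hp1 hmeas in
lemma E_ge_one (n : ℕ) :
    1 ≤ ∫ ω, Real.exp (Real.log (1 / p) * (longestRun (fun i => X i ω) n : ℝ)) ∂μ := by
  rw [integral_exp_eq μ X p hp0 hmeas n]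
  have := Finset.sum_nonneg (csum_nonneg μ X p hp0 hp1 n)
  linarith

include hp0 hp1 hmeas hindep hdist in
lemma E_upper (n : ℕ) :
    ∫ ω, Real.exp (Real.log (1 / p) * (longestRun (fun i => X i ω) n : ℝ)) ∂μ
      ≤ ((n : ℝ) + 1) ^ 2 := by
  rw [integral_exp_eq μ X p hp0 hmeas n]
  have hterm : ∀ k ∈ Finset.range n, ((1 / p) ^ (k + 1) - (1 / p) ^ k) *
      (μ {ω | k + 1 ≤ longestRun (fun i => X i ω) n}).toReal ≤ (n : ℝ) + 1 := by
    intro k _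
    have hr : (μ {ω | k + 1 ≤ longestRun (fun i => X i ω) n}).toReal
        ≤ ((n : ℝ) + 1) * p ^ (k + 1) := by
      have h := prob_upper μ X p hindep hdist n (k + 1) (Nat.le_add_left 1 k)
      have hfin : ((n : ℝ≥0∞) + 1) * ENNReal.ofReal p ^ (k + 1) ≠ ⊤ := by
        apply ENNReal.mul_ne_top (by simp) (by simp [ENNReal.pow_ne_top, ENNReal.ofReal_ne_top])
      calc (μ {ω | k + 1 ≤ longestRun (fun i => X i ω) n}).toReal
          ≤ (((n : ℝ≥0∞) + 1) * ENNReal.ofReal p ^ (k + 1)).toReal :=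
            ENNReal.toReal_mono hfin h
        _ = ((n : ℝ) + 1) * p ^ (k + 1) := by
            simp [ENNReal.toReal_mul, ENNReal.toReal_pow, ENNReal.toReal_ofReal hp0.le,
              ENNReal.toReal_add]
    have hc : (1 / p) ^ (k + 1) - (1 / p) ^ k ≤ (1 / p) ^ (k + 1) := by
      have : (0:ℝ) ≤ (1/p) ^ k := by positivity
      linarith
    have hcpos : (0:ℝ) ≤ (1 / p) ^ (k + 1) - (1 / p) ^ k := by
      have hq1 : (1:ℝ) ≤ 1 / p := by rw [le_div_iff₀ hp0]; linarith
      have h3 : (1 / p) ^ k ≤ (1 / p) ^ (k + 1) := pow_le_pow_right₀ hq1 (Nat.le_succ k)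
      linarith
    calc ((1 / p) ^ (k + 1) - (1 / p) ^ k) *
        (μ {ω | k + 1 ≤ longestRun (fun i => X i ω) n}).toReal
        ≤ (1 / p) ^ (k + 1) * (((n : ℝ) + 1) * p ^ (k + 1)) := by
          apply mul_le_mul hc hr ENNReal.toReal_nonneg (by positivity)
      _ = ((n : ℝ) + 1) * ((1 / p) * p) ^ (k + 1) := by rw [mul_pow]; ring
      _ = (n : ℝ) + 1 := by
          rw [one_div_mul_cancel hp0.ne', one_pow, mul_one]
  have hsum := Finset.sum_le_sum hterm
  rw [Finset.sum_const, Finset.card_range, nsmul_eq_mul] at hsum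
  have h2 : (1:ℝ) + (n:ℝ) * ((n:ℝ) + 1) ≤ ((n:ℝ) + 1) ^ 2 := by nlinarith [Nat.cast_nonneg (α := ℝ) n]
  linarith
include hp0 hp1 hmeas hindep hdist in
lemma E_lower : ∀ᶠ n : ℕ in Filter.atTop,
    (1 - p) ^ 2 / 32 * (n : ℝ) ^ 2 ≤
      ∫ ω, Real.exp (Real.log (1 / p) * (longestRun (fun i => X i ω) n : ℝ)) ∂μ := by
  have hq1 : (1:ℝ) < 1 / p := by rw [lt_div_iff₀ hp0]; linarith
  have hlq : 0 < Real.log (1 / p) := Real.log_pos hq1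
  have h1p : (0:ℝ) < 1 - p := by linarith
  set T : ℕ → ℕ := fun n => ⌈Real.log (4 * n / (1 - p)) / Real.log (1 / p)⌉₊ with hT
  -- eventual facts about T
  have hT1 : ∀ᶠ n : ℕ in atTop, 1 ≤ T n := by
    filter_upwards [Filter.eventually_ge_atTop 1] with n hn
    rw [hT]
    rw [Nat.one_le_ceil_iff]
    apply div_pos _ hlq
    apply Real.log_pos
    rw [lt_div_iff₀ h1p]
    have : (1:ℝ) ≤ (n:ℝ) := by exact_mod_cast hn
    nlinarith
  have hT4 : ∀ᶠ n : ℕ in atTop, T n ≤ n / 4 := by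
    have hc : (0:ℝ) < Real.log (1 / p) * (1 - p) / 32 := by positivity
    have hbound := Asymptotics.isLittleO_iff.1 Real.isLittleO_log_id_atTop hc
    have htend : Filter.Tendsto (fun n : ℕ => 4 * (n : ℝ) / (1 - p)) atTop atTop := by
      apply Filter.Tendsto.atTop_div_const h1p
      exact Filter.Tendsto.const_mul_atTop (by norm_num) tendsto_natCast_atTop_atTop
    filter_upwards [htend.eventually hbound, Filter.eventually_ge_atTop 8] with n hn hn8
    have hn1 : (1:ℝ) ≤ (n:ℝ) := by exact_mod_cast (by omega : 1 ≤ n)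
    have hargpos : (0:ℝ) < 4 * n / (1 - p) := by positivity
    simp only [id_eq, Real.norm_eq_abs] at hn
    rw [abs_of_pos hargpos] at hn
    have hlogle : Real.log (4 * n / (1 - p)) ≤ Real.log (1 / p) * (n : ℝ) / 8 := by
      calc Real.log (4 * n / (1 - p)) ≤ |Real.log (4 * n / (1 - p))| := le_abs_self _
        _ ≤ Real.log (1 / p) * (1 - p) / 32 * (4 * n / (1 - p)) := hn
        _ = Real.log (1 / p) * (n : ℝ) / 8 := by field_simp; ring
    rw [hT, Nat.ceil_le]
    rw [div_le_iff₀ hlq]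
    have hcast : ((n / 4 : ℕ) : ℝ) ≥ ((n : ℝ) - 3) / 4 := by
      have hmod : n % 4 ≤ 3 := by omega
      have h4 : (4 : ℝ) * ((n / 4 : ℕ) : ℝ) + ((n % 4 : ℕ) : ℝ) = (n : ℝ) := by
        exact_mod_cast Nat.div_add_mod n 4
      have hm3 : ((n % 4 : ℕ) : ℝ) ≤ 3 := by exact_mod_cast hmod
      linarith
    calc Real.log (4 * n / (1 - p)) ≤ Real.log (1 / p) * (n : ℝ) / 8 := hlogle
      _ ≤ ((n / 4 : ℕ) : ℝ) * Real.log (1 / p) := by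
        rw [ge_iff_le] at hcast
        have hn8r : (8:ℝ) ≤ (n:ℝ) := by exact_mod_cast hn8
        nlinarith [hlq]
  have hTp : ∀ n : ℕ, 1 ≤ n → p ^ T n ≤ (1 - p) / (4 * n) := by
    intro n hn
    have hn1 : (1:ℝ) ≤ (n:ℝ) := by exact_mod_cast hn
    have hargpos : (0:ℝ) < 4 * n / (1 - p) := by positivity
    have hTc : Real.log (4 * n / (1 - p)) / Real.log (1 / p) ≤ (T n : ℝ) := Nat.le_ceil _
    have h2 : Real.log (4 * n / (1 - p)) ≤ (T n : ℝ) * Real.log (1 / p) :=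
      (div_le_iff₀ hlq).1 hTc
    have hlogp : Real.log p = -Real.log (1 / p) := by
      rw [one_div, Real.log_inv, neg_neg]
    have hppow : p ^ T n = Real.exp (-((T n : ℝ) * Real.log (1 / p))) := by
      conv_lhs => rw [← Real.exp_log hp0]
      rw [← Real.exp_nat_mul, hlogp]
      ring_nf
    rw [hppow]
    have h3 : Real.exp (-((T n : ℝ) * Real.log (1 / p)))
        ≤ Real.exp (-(Real.log (4 * n / (1 - p)))) := by
      apply Real.exp_le_exp.2
      linarith
    refine h3.trans ?_
    rw [Real.exp_neg, Real.exp_log hargpos]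
    rw [inv_div]
    -- (1 - p) / (4 * n) = (1-p)/(4n)
  -- main assembly
  filter_upwards [hT1, hT4, Filter.eventually_ge_atTop 8] with n hT1n hT4n hn8
  have hn1 : 1 ≤ n := by omega
  have hn1r : (1:ℝ) ≤ (n:ℝ) := by exact_mod_cast hn1
  rw [integral_exp_eq μ X p hp0 hmeas n]
  set S : Finset ℕ := Finset.Ico (T n - 1) (n / 2) with hS
  have hSsub : S ⊆ Finset.range n := by
    intro k hk
    simp only [hS, Finset.mem_Ico] at hk
    simp only [Finset.mem_range]
    omega
  have hterm : ∀ k ∈ S, (1 - p) ^ 2 * (n : ℝ) / 4 ≤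
      ((1 / p) ^ (k + 1) - (1 / p) ^ k) *
        (μ {ω | k + 1 ≤ longestRun (fun i => X i ω) n}).toReal := by
    intro k hk
    simp only [hS, Finset.mem_Ico] at hk
    have hTt : T n ≤ k + 1 := by omega
    have h2t : 2 * (k + 1) ≤ n := by omega
    set t := k + 1 with ht
    set r := (μ {ω | t ≤ longestRun (fun i => X i ω) n}).toReal with hr
    have hrge : ((n - t : ℕ) : ℝ) * ((1 - p) * p ^ t) ≤ r + (n : ℝ) ^ 2 * p ^ (2 * t) := by
      have h := prob_lower μ X p hp0 hp1 hmeas hindep hdist n t (by omega)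
      have hfin : μ {ω | t ≤ longestRun (fun i => X i ω) n} +
          (n : ℝ≥0∞) ^ 2 * ENNReal.ofReal p ^ (2 * t) ≠ ⊤ := by
        apply ENNReal.add_ne_top.2
        exact ⟨measure_ne_top μ _, ENNReal.mul_ne_top (by simp)
          (ENNReal.pow_ne_top ENNReal.ofReal_ne_top)⟩
      have := ENNReal.toReal_mono hfin h
      rw [ENNReal.toReal_add (measure_ne_top μ _)
        (ENNReal.mul_ne_top (by simp) (ENNReal.pow_ne_top ENNReal.ofReal_ne_top))] at this
      simp only [ENNReal.toReal_mul, ENNReal.toReal_pow, ENNReal.toReal_ofReal hp0.le,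
        ENNReal.toReal_ofReal h1p.le, ENNReal.toReal_natCast] at this
      exact this
    have hnt : ((n - t : ℕ) : ℝ) ≥ (n : ℝ) / 2 := by
      have : ((n - t : ℕ) : ℝ) = (n : ℝ) - (t : ℝ) := by
        rw [Nat.cast_sub (by omega)]
      rw [this]
      have : ((t : ℕ) : ℝ) ≤ (n : ℝ) / 2 := by
        have h := (Nat.cast_le (α := ℝ)).2 h2t
        push_cast at h
        rw [ht]
        push_cast
        simp only [ht] at h; push_cast at h; linarith
      linarith
    have hpt : p ^ t ≤ (1 - p) / (4 * n) :=
      (pow_le_pow_of_le_one hp0.le hp1.le hTt).trans (hTp n hn1)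
    have hrlow : r ≥ (1 - p) * ((n:ℝ)/2) * p ^ t - (n : ℝ) ^ 2 * p ^ (2 * t) := by
      have h0 : ((n - t : ℕ) : ℝ) * ((1 - p) * p ^ t) ≥ (1 - p) * ((n:ℝ)/2) * p ^ t := by
        have hge : (0:ℝ) ≤ (1 - p) * p ^ t := by positivity
        nlinarith [hnt, hge]
      linarith
    have hck : (1 / p) ^ t - (1 / p) ^ (t - 1) = (1 / p) ^ t * (1 - p) := by
      have : (1 / p) ^ (t - 1) = (1 / p) ^ t * p := by
        rw [ht]
        simp only [Nat.add_sub_cancel]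
        rw [pow_succ]
        field_simp
      rw [this]; ring
    have hq : (0:ℝ) < 1 / p := by positivity
    have hqp : (1 / p) ^ t * p ^ t = 1 := by
      rw [← mul_pow, one_div_mul_cancel hp0.ne', one_pow]
    have hqp2 : (1 / p) ^ t * p ^ (2 * t) = p ^ t := by
      calc (1 / p) ^ t * p ^ (2 * t) = ((1 / p) ^ t * p ^ t) * p ^ t := by
            rw [two_mul, pow_add]; ring
        _ = p ^ t := by rw [hqp, one_mul]
    have expand : (1 / p) ^ t * (1 - p) * ((1 - p) * ((n:ℝ)/2) * p ^ t - (n : ℝ) ^ 2 * p ^ (2 * t))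
        = (1 - p) ^ 2 * ((n:ℝ)/2) - (1 - p) * (n : ℝ) ^ 2 * p ^ t := by
      have e1 : (1 / p) ^ t * (1 - p) * ((1 - p) * ((n:ℝ)/2) * p ^ t)
          = (1 - p) ^ 2 * ((n:ℝ)/2) * ((1 / p) ^ t * p ^ t) := by ring
      have e2 : (1 / p) ^ t * (1 - p) * ((n : ℝ) ^ 2 * p ^ (2 * t))
          = (1 - p) * (n : ℝ) ^ 2 * ((1 / p) ^ t * p ^ (2 * t)) := by ring
      rw [mul_sub, e1, e2, hqp, hqp2, mul_one]
    have hlast : (1 - p) * (n : ℝ) ^ 2 * p ^ t ≤ (1 - p) ^ 2 * (n : ℝ) / 4 := by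
      have h4n : (0:ℝ) < 4 * n := by positivity
      calc (1 - p) * (n : ℝ) ^ 2 * p ^ t ≤ (1 - p) * (n : ℝ) ^ 2 * ((1 - p) / (4 * n)) := by
            apply mul_le_mul_of_nonneg_left hpt (by positivity)
        _ = (1 - p) ^ 2 * (n : ℝ) / 4 * ((n:ℝ) / n) := by field_simp
        _ = (1 - p) ^ 2 * (n : ℝ) / 4 := by
            rw [div_self (by positivity : (n:ℝ) ≠ 0), mul_one]
    have hterm2 : ((1 / p) ^ t - (1 / p) ^ (t - 1)) * r ≥
        (1 - p) ^ 2 * ((n:ℝ)/2) - (1 - p) ^ 2 * (n : ℝ) / 4 := by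
      rw [hck]
      calc (1 / p) ^ t * (1 - p) * r
          ≥ (1 / p) ^ t * (1 - p) * ((1 - p) * ((n:ℝ)/2) * p ^ t - (n : ℝ) ^ 2 * p ^ (2 * t)) := by
            apply mul_le_mul_of_nonneg_left hrlow (by positivity)
        _ = (1 - p) ^ 2 * ((n:ℝ)/2) - (1 - p) * (n : ℝ) ^ 2 * p ^ t := expand
        _ ≥ (1 - p) ^ 2 * ((n:ℝ)/2) - (1 - p) ^ 2 * (n : ℝ) / 4 := by linarith
    have : (1 - p) ^ 2 * ((n:ℝ)/2) - (1 - p) ^ 2 * (n : ℝ) / 4 = (1 - p) ^ 2 * (n : ℝ) / 4 := by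
      ring
    rw [this] at hterm2
    have htt : t - 1 = k := by omega
    rw [htt] at hterm2
    exact hterm2
  have hcard : ((S.card : ℕ) : ℝ) ≥ (n : ℝ) / 8 := by
    have hc1 : S.card = n / 2 - (T n - 1) := by
      rw [hS, Nat.card_Ico]
    have hc2 : n / 4 ≤ S.card := by omega
    have hc3 : ((n / 4 : ℕ) : ℝ) ≥ ((n:ℝ) - 3) / 4 := by
      have hmod : n % 4 ≤ 3 := by omega
      have h4 : (4 : ℝ) * ((n / 4 : ℕ) : ℝ) + ((n % 4 : ℕ) : ℝ) = (n : ℝ) := by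
        exact_mod_cast Nat.div_add_mod n 4
      have hm3 : ((n % 4 : ℕ) : ℝ) ≤ 3 := by exact_mod_cast hmod
      linarith
    have hn8r : (8:ℝ) ≤ (n:ℝ) := by exact_mod_cast hn8
    have := (Nat.cast_le (α := ℝ)).2 hc2
    linarith
  have hsum : ∑ k ∈ Finset.range n, ((1 / p) ^ (k + 1) - (1 / p) ^ k) *
      (μ {ω | k + 1 ≤ longestRun (fun i => X i ω) n}).toReal
      ≥ (n : ℝ) / 8 * ((1 - p) ^ 2 * (n : ℝ) / 4) := by
    calc ∑ k ∈ Finset.range n, ((1 / p) ^ (k + 1) - (1 / p) ^ k) *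
        (μ {ω | k + 1 ≤ longestRun (fun i => X i ω) n}).toReal
        ≥ ∑ k ∈ S, ((1 / p) ^ (k + 1) - (1 / p) ^ k) *
            (μ {ω | k + 1 ≤ longestRun (fun i => X i ω) n}).toReal := by
          apply Finset.sum_le_sum_of_subset_of_nonneg hSsub
          intro k hk _
          exact csum_nonneg μ X p hp0 hp1 n k hk
      _ ≥ ∑ k ∈ S, (1 - p) ^ 2 * (n : ℝ) / 4 := Finset.sum_le_sum hterm
      _ = (S.card : ℝ) * ((1 - p) ^ 2 * (n : ℝ) / 4) := by
          rw [Finset.sum_const, nsmul_eq_mul]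
      _ ≥ (n : ℝ) / 8 * ((1 - p) ^ 2 * (n : ℝ) / 4) := by
          apply mul_le_mul_of_nonneg_right hcard (by positivity)
  have hfinal : (n : ℝ) / 8 * ((1 - p) ^ 2 * (n : ℝ) / 4) = (1 - p) ^ 2 / 32 * (n : ℝ) ^ 2 := by
    ring
  rw [hfinal] at hsum
  linarith
lemma final_limit (E : ℕ → ℝ) (q c : ℝ) (hq1 : 1 < q) (hc : 0 < c)
    (hE1 : ∀ n, 1 ≤ E n)
    (hEup : ∀ n, E n ≤ ((n : ℝ) + 1) ^ 2)
    (hElow : ∀ᶠ n : ℕ in atTop, c * (n : ℝ) ^ 2 ≤ E n) :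
    Filter.Tendsto (fun n : ℕ => (Real.log n / Real.log q)⁻¹ * Real.log (E n))
      atTop (nhds (2 * Real.log q)) := by
  have hlq : 0 < Real.log q := Real.log_pos hq1
  have hlogn : Filter.Tendsto (fun n : ℕ => Real.log n) atTop atTop :=
    Real.tendsto_log_atTop.comp tendsto_natCast_atTop_atTop
  have hinv : Filter.Tendsto (fun n : ℕ => (Real.log n)⁻¹) atTop (nhds 0) :=
    hlogn.inv_tendsto_atTop
  have hG : Filter.Tendsto (fun n : ℕ => 2 * Real.log q + (Real.log c * Real.log q) * (Real.log n)⁻¹)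
      atTop (nhds (2 * Real.log q)) := by
    have := hinv.const_mul (Real.log c * Real.log q)
    simpa using (tendsto_const_nhds.add this)
  have hH : Filter.Tendsto (fun n : ℕ => 2 * Real.log q + (2 * Real.log 2 * Real.log q) * (Real.log n)⁻¹)
      atTop (nhds (2 * Real.log q)) := by
    have := hinv.const_mul (2 * Real.log 2 * Real.log q)
    simpa using (tendsto_const_nhds.add this)
  apply tendsto_of_tendsto_of_tendsto_of_le_of_le' hG hH
  · -- lower bound eventually
    filter_upwards [hElow, Filter.eventually_ge_atTop 2] with n hl hn2
    have hn1 : (1:ℝ) ≤ (n:ℝ) := by exact_mod_cast (by omega : 1 ≤ n)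
    have hlogn_pos : 0 < Real.log n := by
      apply Real.log_pos
      exact_mod_cast (by omega : 2 ≤ n)
    have hEpos : (0:ℝ) < E n := lt_of_lt_of_le one_pos (hE1 n)
    have hlogE : Real.log c + 2 * Real.log n ≤ Real.log (E n) := by
      have hcn : (0:ℝ) < c * (n:ℝ) ^ 2 := by positivity
      have := Real.log_le_log hcn hl
      rw [Real.log_mul hc.ne' (by positivity), Real.log_pow] at this
      push_cast at this
      linarith
    rw [inv_div]
    rw [div_mul_eq_mul_div, le_div_iff₀ hlogn_pos]
    have expand : (2 * Real.log q + Real.log c * Real.log q * (Real.log n)⁻¹) * Real.log n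
        = Real.log q * (2 * Real.log n + Real.log c) := by
      field_simp
    rw [expand]
    calc Real.log q * (2 * Real.log n + Real.log c)
        ≤ Real.log q * Real.log (E n) := by
          apply mul_le_mul_of_nonneg_left (by linarith) hlq.le
      _ = Real.log q * Real.log (E n) := rfl
  · -- upper bound eventually
    filter_upwards [Filter.eventually_ge_atTop 2] with n hn2
    have hn1 : (1:ℝ) ≤ (n:ℝ) := by exact_mod_cast (by omega : 1 ≤ n)
    have hlogn_pos : 0 < Real.log n := by
      apply Real.log_pos
      exact_mod_cast (by omega : 2 ≤ n)
    have hEpos : (0:ℝ) < E n := lt_of_lt_of_le one_pos (hE1 n)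
    have hlogE : Real.log (E n) ≤ 2 * Real.log n + 2 * Real.log 2 := by
      have h1 : Real.log (E n) ≤ Real.log (((n:ℝ) + 1) ^ 2) := Real.log_le_log hEpos (hEup n)
      have h2 : Real.log (((n:ℝ) + 1) ^ 2) = 2 * Real.log ((n:ℝ) + 1) := by
        rw [Real.log_pow]; push_cast; ring
      have h3 : Real.log ((n:ℝ) + 1) ≤ Real.log (2 * n) := by
        apply Real.log_le_log (by linarith)
        linarith
      rw [Real.log_mul (by norm_num) (by linarith)] at h3
      linarith
    rw [inv_div, div_mul_eq_mul_div, div_le_iff₀ hlogn_pos]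
    have expand : (2 * Real.log q + 2 * Real.log 2 * Real.log q * (Real.log n)⁻¹) * Real.log n
        = Real.log q * (2 * Real.log n + 2 * Real.log 2) := by
      field_simp
    rw [expand]
    apply mul_le_mul_of_nonneg_left hlogE hlq.le


end events
end auxLemmas

theorem laplace_critical
    {Ω : Type*} [MeasurableSpace Ω] (μ : Measure Ω) [IsProbabilityMeasure μ]
    (X : ℕ → Ω → Bool) (p : ℝ) (hp0 : 0 < p) (hp1 : p < 1)
    (hmeas : ∀ i, Measurable (X i))
    (hindep : iIndepFun X μ)
    (hdist : ∀ i, μ {ω | X i ω = true} = ENNReal.ofReal p) :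
    Tendsto (fun n : ℕ =>
        (Real.log n / Real.log (1 / p))⁻¹ *
          Real.log (∫ ω, Real.exp (Real.log (1 / p) * (longestRun (fun i => X i ω) n : ℝ)) ∂μ))
      atTop (nhds (2 * Real.log (1 / p))) := by
  have hq1 : (1:ℝ) < 1 / p := by rw [lt_div_iff₀ hp0]; linarith
  have hc : (0:ℝ) < (1 - p) ^ 2 / 32 := by
    have h1p : (0:ℝ) < 1 - p := by linarith
    positivity
  exact final_limit
    (fun n => ∫ ω, Real.exp (Real.log (1 / p) * (longestRun (fun i => X i ω) n : ℝ)) ∂μ)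
    (1 / p) ((1 - p) ^ 2 / 32) hq1 hc
    (fun n => E_ge_one μ X p hp0 hp1 hmeas n)
    (fun n => E_upper μ X p hp0 hp1 hmeas hindep hdist n)
    (E_lower μ X p hp0 hp1 hmeas hindep hdist)
end

section
/- For i.i.d. Bernoulli(p) trials with 0<p<1, for integers m > k ≥ 1, P(L(m-1) < k ≤ L(m)) = q p^k · P(L(m-k-1) < k), and consequently P(L(m) < k) ≤ (1 - q p^k) P(L(m-1) < k). -/
open MeasureTheory ProbabilityTheory Filter Set
open scoped ENNReal Classical

/-- Auxiliary predicate: there is a run of `k` `true`s within the first `n` trials. -/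
def hasRun (X : ℕ → Bool) (k n : ℕ) : Prop :=
  ∃ i, i + k ≤ n ∧ ∀ j < k, X (i + j) = true

lemma le_longestRun_iff {X : ℕ → Bool} {k n : ℕ} (hk : 0 < k) :
    k ≤ longestRun X n ↔ hasRun X k n := by
  constructor
  · intro h
    rw [longestRun, Finset.le_sup_iff hk] at h
    obtain ⟨ℓ, -, hℓ⟩ := h
    split_ifs at hℓ with hcond
    · obtain ⟨i, hle, hrun⟩ := hcond
      exact ⟨i, le_trans (by omega) hle, fun j hj => hrun j (by omega)⟩
    · omega
  · rintro ⟨i, hle, hrun⟩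
    rw [longestRun]
    have hmem : k ∈ Finset.range (n + 1) := Finset.mem_range.2 (by omega)
    refine le_trans ?_ (Finset.le_sup hmem)
    rw [if_pos ⟨i, hle, hrun⟩]

lemma longestRun_lt_iff {X : ℕ → Bool} {k n : ℕ} (hk : 0 < k) :
    longestRun X n < k ↔ ¬ hasRun X k n := by
  rw [← not_le, not_iff_not, le_longestRun_iff hk]

lemma hasRun_mono {X : ℕ → Bool} {k n n' : ℕ} (h : n ≤ n') :
    hasRun X k n → hasRun X k n' := by
  rintro ⟨i, hle, hrun⟩; exact ⟨i, le_trans hle h, hrun⟩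

lemma longestRun_congr {X Y : ℕ → Bool} {n : ℕ} (h : ∀ i < n, X i = Y i) :
    longestRun X n = longestRun Y n := by
  unfold longestRun
  refine Finset.sup_congr rfl fun ℓ hℓ => ?_
  congr 1
  rw [eq_iff_iff]
  constructor <;> rintro ⟨i, hle, hrun⟩ <;> refine ⟨i, hle, fun j hj => ?_⟩
  · rw [← h (i + j) (by omega)]; exact hrun j hj
  · rw [h (i + j) (by omega)]; exact hrun j hj

lemma event_iff (X : ℕ → Bool) {k t : ℕ} (hk : 0 < k) :
    (longestRun X (t + k) < k ∧ k ≤ longestRun X (t + k + 1)) ↔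
    (longestRun X t < k ∧ X t = false ∧ ∀ j < k, X (t + 1 + j) = true) := by
  rw [longestRun_lt_iff hk, le_longestRun_iff hk, longestRun_lt_iff hk]
  constructor
  · rintro ⟨h1, i, hle, hrun⟩
    have hi : i = t + 1 := by
      by_contra hne
      exact h1 ⟨i, by omega, hrun⟩
    subst hi
    have hXt : X t = false := by
      by_contra hne
      refine h1 ⟨t, le_refl _, fun j hj => ?_⟩
      rcases Nat.eq_zero_or_pos j with rfl | hj0
      · simpa using Bool.not_eq_false (X t) |>.mp hne
      · have := hrun (j - 1) (by omega)
        rwa [show t + 1 + (j - 1) = t + j by omega] at this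
    refine ⟨fun ⟨i', hle', hrun'⟩ => h1 ⟨i', by omega, hrun'⟩, hXt, fun j hj => ?_⟩
    exact hrun j hj
  · rintro ⟨h1, hXt, hrun⟩
    refine ⟨?_, t + 1, by omega, hrun⟩
    rintro ⟨i, hle, hrun'⟩
    rcases le_or_gt (i + k) t with h | h
    · exact h1 ⟨i, h, hrun'⟩
    · have hit : i ≤ t := by omega
      have := hrun' (t - i) (by omega)
      rw [show i + (t - i) = t by omega, hXt] at this
      exact Bool.false_ne_true this

lemma setOf_longestRun_lt_eq {Ω : Type*} (X : ℕ → Ω → Bool) (n k : ℕ) :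
    {ω | longestRun (fun i => X i ω) n < k}
      = (fun a (i : ↥(Finset.range n)) => X i a) ⁻¹'
          {f : (i : ↥(Finset.range n)) → Bool |
            longestRun (fun i => if h : i ∈ Finset.range n then f ⟨i, h⟩ else false) n < k} := by
  ext ω
  simp only [Set.mem_setOf_eq, Set.mem_preimage]
  rw [longestRun_congr (X := fun i => X i ω)
    (Y := fun i => if h : i ∈ Finset.range n then X i ω else false)
    (fun i hi => by simp [Finset.mem_range.2 hi])]

lemma measurableSet_longestRun_lt {Ω : Type*} [MeasurableSpace Ω] {X : ℕ → Ω → Bool}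
    (hmeas : ∀ i, Measurable (X i)) (n k : ℕ) :
    MeasurableSet {ω | longestRun (fun i => X i ω) n < k} := by
  rw [setOf_longestRun_lt_eq]
  have h1 : Measurable (fun a (i : ↥(Finset.range n)) => X i a) :=
    measurable_pi_lambda _ fun i => hmeas i
  exact h1 MeasurableSet.of_discrete

theorem longestRun_recursion
    {Ω : Type*} [MeasurableSpace Ω] (μ : Measure Ω) [IsProbabilityMeasure μ]
    (X : ℕ → Ω → Bool) (p : ℝ) (hp0 : 0 < p) (hp1 : p < 1)
    (hmeas : ∀ i, Measurable (X i))
    (hindep : iIndepFun X μ)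
    (hdist : ∀ i, μ {ω | X i ω = true} = ENNReal.ofReal p)
    (m k : ℕ) (hk : 1 ≤ k) (hkm : k < m) :
    μ {ω | longestRun (fun i => X i ω) (m - 1) < k ∧ k ≤ longestRun (fun i => X i ω) m}
        = ENNReal.ofReal ((1 - p) * p ^ k) *
            μ {ω | longestRun (fun i => X i ω) (m - k - 1) < k} ∧
      μ {ω | longestRun (fun i => X i ω) m < k}
        ≤ ENNReal.ofReal (1 - (1 - p) * p ^ k) *
            μ {ω | longestRun (fun i => X i ω) (m - 1) < k} := by
  have hk0 : 0 < k := hk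
  set t := m - k - 1 with ht
  have hm1 : m - 1 = t + k := by omega
  have hm : m = t + k + 1 := by omega
  set T := Finset.Icc t (t + k) with hT
  set E : ℕ → Set Bool := fun i => if i = t then ({false} : Set Bool) else {true} with hE
  -- rewrite the main event
  have hev : {ω | longestRun (fun i => X i ω) (m - 1) < k ∧ k ≤ longestRun (fun i => X i ω) m}
      = {ω | longestRun (fun i => X i ω) t < k} ∩ ⋂ i ∈ T, X i ⁻¹' E i := by
    ext ω
    simp only [Set.mem_setOf_eq, Set.mem_inter_iff, Set.mem_iInter, Set.mem_preimage]
    rw [hm1, hm, event_iff _ hk0]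
    constructor
    · rintro ⟨h1, h2, h3⟩
      refine ⟨h1, fun i hi => ?_⟩
      rw [hT, Finset.mem_Icc] at hi
      by_cases hit : i = t
      · subst hit; simp [hE, h2]
      · have := h3 (i - t - 1) (by omega)
        rw [show t + 1 + (i - t - 1) = i by omega] at this
        simp [hE, hit, this]
    · rintro ⟨h1, h2⟩
      refine ⟨h1, ?_, fun j hj => ?_⟩
      · have := h2 t (by rw [hT, Finset.mem_Icc]; omega)
        simpa [hE] using this
      · have := h2 (t + 1 + j) (by rw [hT, Finset.mem_Icc]; omega)
        simpa [hE, show t + 1 + j ≠ t by omega] using this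
  -- single-coordinate probabilities
  have hPtrue : ∀ i, μ (X i ⁻¹' {true}) = ENNReal.ofReal p := by
    intro i; rw [show X i ⁻¹' {true} = {ω | X i ω = true} by ext ω; simp, hdist i]
  have hPfalse : ∀ i, μ (X i ⁻¹' {false}) = ENNReal.ofReal (1 - p) := by
    intro i
    have hc : X i ⁻¹' {false} = (X i ⁻¹' {true})ᶜ := by
      ext ω; cases h : X i ω <;> simp [h]
    rw [hc, measure_compl ((hmeas i) (measurableSet_singleton true)) (measure_ne_top μ _),
      hPtrue, measure_univ, ENNReal.ofReal_sub 1 hp0.le, ENNReal.ofReal_one]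
  -- the measure of the block event
  have hB : μ (⋂ i ∈ T, X i ⁻¹' E i) = ENNReal.ofReal ((1 - p) * p ^ k) := by
    rw [hindep.measure_inter_preimage_eq_mul T (fun i _ => MeasurableSet.of_discrete)]
    have hins : T = insert t (Finset.Icc (t + 1) (t + k)) := by
      ext i; simp only [hT, Finset.mem_Icc, Finset.mem_insert]; omega
    rw [hins, Finset.prod_insert (by simp [Finset.mem_Icc])]
    have h1 : μ (X t ⁻¹' E t) = ENNReal.ofReal (1 - p) := by
      rw [show E t = {false} by simp [hE]]; exact hPfalse t
    have h2 : ∀ i ∈ Finset.Icc (t + 1) (t + k), μ (X i ⁻¹' E i) = ENNReal.ofReal p := by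
      intro i hi; rw [Finset.mem_Icc] at hi
      rw [show E i = {true} by simp only [hE]; rw [if_neg (by omega)]]; exact hPtrue i
    rw [h1, Finset.prod_congr rfl h2, Finset.prod_const, Nat.card_Icc,
      show t + k + 1 - (t + 1) = k by omega,
      ENNReal.ofReal_mul (by linarith), ENNReal.ofReal_pow hp0.le]
  -- independence of the two pieces
  have hST : Disjoint (Finset.range t) T := by
    rw [Finset.disjoint_left]
    intro i hi hiT
    rw [Finset.mem_range] at hi
    rw [hT, Finset.mem_Icc] at hiT
    omega
  have hIF := hindep.indepFun_finset (Finset.range t) T hST hmeas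
  have hAB : μ ({ω | longestRun (fun i => X i ω) t < k} ∩ ⋂ i ∈ T, X i ⁻¹' E i)
      = μ {ω | longestRun (fun i => X i ω) t < k} * μ (⋂ i ∈ T, X i ⁻¹' E i) := by
    have hBset : (⋂ i ∈ T, X i ⁻¹' E i)
        = (fun a (i : ↥T) => X i a) ⁻¹' {f : (i : ↥T) → Bool | ∀ i : ↥T, f i ∈ E i} := by
      ext ω
      simp only [Set.mem_iInter, Set.mem_preimage, Set.mem_setOf_eq]
      exact ⟨fun h i => h i i.2, fun h i hi => h ⟨i, hi⟩⟩
    rw [setOf_longestRun_lt_eq, hBset,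
      hIF.measure_inter_preimage_eq_mul _ _ MeasurableSet.of_discrete MeasurableSet.of_discrete,
      ← setOf_longestRun_lt_eq, ← hBset]
  have hpart1 : μ {ω | longestRun (fun i => X i ω) (m - 1) < k ∧
        k ≤ longestRun (fun i => X i ω) m}
      = ENNReal.ofReal ((1 - p) * p ^ k) * μ {ω | longestRun (fun i => X i ω) t < k} := by
    rw [hev, hAB, hB, mul_comm]
  refine ⟨hpart1, ?_⟩
  -- second part
  have hmono : {ω | longestRun (fun i => X i ω) m < k}
      ⊆ {ω | longestRun (fun i => X i ω) (m - 1) < k} := by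
    intro ω h
    simp only [Set.mem_setOf_eq, longestRun_lt_iff hk0] at h ⊢
    exact fun hr => h (hasRun_mono (by omega) hr)
  have hmono2 : {ω | longestRun (fun i => X i ω) (m - 1) < k}
      ⊆ {ω | longestRun (fun i => X i ω) t < k} := by
    intro ω h
    simp only [Set.mem_setOf_eq, longestRun_lt_iff hk0] at h ⊢
    exact fun hr => h (hasRun_mono (by omega) hr)
  have hunion : {ω | longestRun (fun i => X i ω) (m - 1) < k}
      = {ω | longestRun (fun i => X i ω) m < k}
        ∪ {ω | longestRun (fun i => X i ω) (m - 1) < k ∧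
            k ≤ longestRun (fun i => X i ω) m} := by
    ext ω
    simp only [Set.mem_setOf_eq, Set.mem_union]
    constructor
    · intro h
      rcases lt_or_ge (longestRun (fun i => X i ω) m) k with h' | h'
      · exact Or.inl h'
      · exact Or.inr ⟨h, h'⟩
    · rintro (h | ⟨h, -⟩)
      · exact hmono h
      · exact h
  have hdisj : Disjoint {ω | longestRun (fun i => X i ω) m < k}
      {ω | longestRun (fun i => X i ω) (m - 1) < k ∧ k ≤ longestRun (fun i => X i ω) m} := by
    rw [Set.disjoint_left]
    rintro ω h1 ⟨-, h2⟩
    simp only [Set.mem_setOf_eq] at h1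
    omega
  have hmeasEv : MeasurableSet {ω | longestRun (fun i => X i ω) (m - 1) < k ∧
      k ≤ longestRun (fun i => X i ω) m} := by
    have : {ω | longestRun (fun i => X i ω) (m - 1) < k ∧ k ≤ longestRun (fun i => X i ω) m}
        = {ω | longestRun (fun i => X i ω) (m - 1) < k}
          ∩ {ω | longestRun (fun i => X i ω) m < k}ᶜ := by
      ext ω; simp [not_lt]
    rw [this]
    exact (measurableSet_longestRun_lt hmeas _ _).inter
      (measurableSet_longestRun_lt hmeas _ _).compl
  have hsum : μ {ω | longestRun (fun i => X i ω) (m - 1) < k}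
      = μ {ω | longestRun (fun i => X i ω) m < k}
        + ENNReal.ofReal ((1 - p) * p ^ k) * μ {ω | longestRun (fun i => X i ω) t < k} := by
    rw [hunion, measure_union hdisj hmeasEv, hpart1]
  set c := ENNReal.ofReal ((1 - p) * p ^ k) with hc
  set a := μ {ω | longestRun (fun i => X i ω) m < k}
  set b := μ {ω | longestRun (fun i => X i ω) (m - 1) < k}
  set d := μ {ω | longestRun (fun i => X i ω) t < k}
  have hbd : b ≤ d := measure_mono hmono2
  have hq : 0 ≤ (1 - p) * p ^ k := mul_nonneg (by linarith) (pow_nonneg hp0.le k)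
  have hrhs : ENNReal.ofReal (1 - (1 - p) * p ^ k) = 1 - c := by
    rw [hc, ← ENNReal.ofReal_one, ← ENNReal.ofReal_sub _ hq]
  rw [hrhs]
  have hcb_ne : c * b ≠ ⊤ := by
    exact ENNReal.mul_ne_top ENNReal.ofReal_ne_top (measure_ne_top μ _)
  have hle : a + c * b ≤ b := by
    calc a + c * b ≤ a + c * d := add_le_add_right (mul_le_mul_right hbd c) a
      _ = b := hsum.symm
  have h1 : a ≤ b - c * b := ENNReal.le_sub_of_add_le_right hcb_ne hle
  have h2 : (1 - c) * b = b - c * b := by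
    rw [ENNReal.sub_mul (fun _ _ => measure_ne_top μ _), one_mul]
  rw [h2]
  exact h1
end

section
/- For i.i.d. Bernoulli(p) trials with 0<p<1, P(L(n) < k) ≥ ∏_{m=k}^{n} P(S_m - S_{m-k} < k) = (1-p^k)^{n-k+1} for 1 ≤ k ≤ n, where S_i = X_1+...+X_i; i.e., the events {S_m - S_{m-k} < k}, k ≤ m ≤ n, are positively correlated. -/
open MeasureTheory ProbabilityTheory Filter Set
open scoped ENNReal Classical

section RunAux

variable {Ω : Type*} [MeasurableSpace Ω] {μ : Measure Ω} [IsProbabilityMeasure μ]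
  {X : ℕ → Ω → Bool} {p : ℝ}

/-- Window event: some failure in `[m-k, m)`. -/
def runE (X : ℕ → Ω → Bool) (k m : ℕ) : Set Ω :=
  {ω | ∃ j ∈ Finset.Ico (m - k) m, X j ω = false}

/-- No run of length `k` among windows ending in `[k, n]`. -/
def runG (X : ℕ → Ω → Bool) (k n : ℕ) : Set Ω :=
  ⋂ m ∈ Finset.Icc k n, runE X k m

omit [MeasurableSpace Ω] in
lemma mem_runG {k n : ℕ} {ω : Ω} :
    ω ∈ runG X k n ↔ ∀ m ∈ Finset.Icc k n, ∃ j ∈ Finset.Ico (m - k) m, X j ω = false := by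
  simp [runG, runE]

omit [IsProbabilityMeasure μ] in
lemma meas_allTrue (hindep : iIndepFun X μ)
    (hdist : ∀ i, μ {ω | X i ω = true} = ENNReal.ofReal p) (s : Finset ℕ) :
    μ (⋂ j ∈ s, {ω | X j ω = true}) = ENNReal.ofReal p ^ s.card := by
  rw [hindep.meas_biInter (s := fun j => {ω | X j ω = true})
      (fun i _ => ⟨{true}, trivial, rfl⟩)]
  rw [Finset.prod_congr rfl fun i _ => hdist i, Finset.prod_const]

omit [MeasurableSpace Ω] [IsProbabilityMeasure μ] in
lemma runE_compl (k m : ℕ) :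
    runE X k m = (⋂ j ∈ Finset.Ico (m - k) m, {ω | X j ω = true})ᶜ := by
  ext ω
  simp [runE, Bool.not_eq_true]

omit [IsProbabilityMeasure μ] in
lemma measurableSet_allTrue (hmeas : ∀ i, Measurable (X i)) (s : Finset ℕ) :
    MeasurableSet (⋂ j ∈ s, {ω | X j ω = true}) :=
  MeasurableSet.biInter s.countable_toSet fun j _ =>
    (hmeas j) (measurableSet_singleton true)

lemma meas_runE (hmeas : ∀ i, Measurable (X i))
    (hindep : iIndepFun X μ)
    (hdist : ∀ i, μ {ω | X i ω = true} = ENNReal.ofReal p)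
    {k m : ℕ} (hkm : k ≤ m) :
    μ (runE X k m) = 1 - ENNReal.ofReal p ^ k := by
  rw [runE_compl, prob_compl_eq_one_sub (measurableSet_allTrue hmeas _),
    meas_allTrue hindep hdist, Nat.card_Ico, Nat.sub_sub_self hkm]

lemma toReal_one_sub_pow (hp0 : 0 ≤ p) (hp1 : p ≤ 1) (k : ℕ) :
    ((1 : ℝ≥0∞) - ENNReal.ofReal p ^ k).toReal = 1 - p ^ k := by
  rw [← ENNReal.ofReal_pow hp0,
    ENNReal.toReal_sub_of_le (ENNReal.ofReal_le_one.mpr (pow_le_one₀ hp0 hp1)) ENNReal.one_ne_top,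
    ENNReal.toReal_one, ENNReal.toReal_ofReal (pow_nonneg hp0 k)]

lemma key_step' (hmeas : ∀ i, Measurable (X i))
    (hindep : iIndepFun X μ)
    (hdist : ∀ i, μ {ω | X i ω = true} = ENNReal.ofReal p)
    {k N : ℕ} (hk : 1 ≤ k) (hkN : k ≤ N) :
    μ (runG X k N ∩ ⋂ j ∈ Finset.Ico (N + 1 - k) (N + 1), {ω | X j ω = true}) ≤
      ENNReal.ofReal p ^ k * μ (runG X k N) := by
  set S : Finset ℕ := Finset.range (N + 1 - k) with hS
  set T : Finset ℕ := Finset.Ico (N + 1 - k) (N + 1) with hT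
  set C : Set Ω := ⋂ j ∈ T, {ω | X j ω = true} with hCdef
  set Q : Set Ω := runG X k (N + 1 - k) ∩ {ω | X (N - k) ω = false} with hQdef
  have step1 : runG X k N ∩ C ⊆ Q ∩ C := by
    rintro ω ⟨hG, hC⟩
    rw [mem_runG] at hG
    have hC' : ∀ j ∈ T, X j ω = true := by
      intro j hj
      exact Set.mem_iInter₂.mp hC j hj
    refine ⟨⟨?_, ?_⟩, hC⟩
    · rw [mem_runG]
      intro m hm
      rw [Finset.mem_Icc] at hm
      exact hG m (Finset.mem_Icc.mpr ⟨hm.1, by omega⟩)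
    · obtain ⟨j, hj, hjf⟩ := hG N (Finset.mem_Icc.mpr ⟨hkN, le_rfl⟩)
      rw [Finset.mem_Ico] at hj
      rcases Nat.lt_or_ge j (N + 1 - k) with hlt | hge
      · have hj' : j = N - k := by omega
        rwa [← hj']
      · have h2 := hC' j (Finset.mem_Ico.mpr ⟨hge, by omega⟩)
        rw [h2] at hjf
        exact absurd hjf (by simp)
  have step2 : Q ⊆ runG X k N := by
    rintro ω ⟨hG, hf⟩
    rw [mem_runG] at hG ⊢
    intro m hm
    rw [Finset.mem_Icc] at hm
    rcases le_or_gt m (N + 1 - k) with h1 | h1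
    · exact hG m (Finset.mem_Icc.mpr ⟨hm.1, h1⟩)
    · exact ⟨N - k, Finset.mem_Ico.mpr ⟨by omega, by omega⟩, hf⟩
  have hdisj : Disjoint S T := by
    rw [Finset.disjoint_left]
    intro a ha hb
    rw [hS, Finset.mem_range] at ha
    rw [hT, Finset.mem_Ico] at hb
    omega
  have hIF := hindep.indepFun_finset S T hdisj hmeas
  set Q' : Set (↥S → Bool) :=
    {v | (∀ m ∈ Finset.Icc k (N + 1 - k),
        ∃ j : ↥S, (j : ℕ) ∈ Finset.Ico (m - k) m ∧ v j = false) ∧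
      ∃ j : ↥S, (j : ℕ) = N - k ∧ v j = false} with hQ'
  set C' : Set (↥T → Bool) := {v | ∀ j, v j = true} with hC'
  have hQeq : Q = (fun ω (i : ↥S) => X i ω) ⁻¹' Q' := by
    ext ω
    simp only [hQdef, hQ', Set.mem_inter_iff, Set.mem_setOf_eq, Set.mem_preimage, mem_runG]
    constructor
    · rintro ⟨hG, hf⟩
      refine ⟨fun m hm => ?_, ⟨⟨N - k, Finset.mem_range.mpr (by omega)⟩, rfl, hf⟩⟩
      obtain ⟨j, hj, hjf⟩ := hG m hm
      rw [Finset.mem_Icc] at hm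
      rw [Finset.mem_Ico] at hj
      exact ⟨⟨j, Finset.mem_range.mpr (by omega)⟩, Finset.mem_Ico.mpr hj, hjf⟩
    · rintro ⟨h1, j0, hj0, hj0f⟩
      refine ⟨fun m hm => ?_, hj0 ▸ hj0f⟩
      obtain ⟨j, hjm, hjf⟩ := h1 m hm
      exact ⟨(j : ℕ), hjm, hjf⟩
  have hCeq : C = (fun ω (i : ↥T) => X i ω) ⁻¹' C' := by
    ext ω
    simp only [hCdef, hC', Set.mem_iInter, Set.mem_setOf_eq, Set.mem_preimage]
    constructor
    · intro h j
      exact h j j.2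
    · intro h j hj
      exact h ⟨j, hj⟩
  have step3 : μ (Q ∩ C) = μ Q * μ C := by
    rw [hQeq, hCeq]
    exact hIF.measure_inter_preimage_eq_mul _ _ (Set.toFinite Q').measurableSet
      (Set.toFinite C').measurableSet
  have hmuC : μ C = ENNReal.ofReal p ^ k := by
    rw [hCdef, meas_allTrue hindep hdist, Nat.card_Ico]
    congr 1
    omega
  calc μ (runG X k N ∩ C) ≤ μ (Q ∩ C) := measure_mono step1
    _ = μ Q * μ C := step3
    _ ≤ μ (runG X k N) * μ C := mul_le_mul_left (measure_mono step2) _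
    _ = ENNReal.ofReal p ^ k * μ (runG X k N) := by rw [hmuC, mul_comm]

lemma key_bound (hp0 : 0 < p) (hp1 : p < 1) (hmeas : ∀ i, Measurable (X i))
    (hindep : iIndepFun X μ)
    (hdist : ∀ i, μ {ω | X i ω = true} = ENNReal.ofReal p)
    {k : ℕ} (hk : 1 ≤ k) :
    ∀ N, k ≤ N → (1 - p ^ k) ^ (N - k + 1) ≤ (μ (runG X k N)).toReal := by
  have h1pk : (0:ℝ) ≤ 1 - p ^ k := by
    have := pow_le_one₀ hp0.le hp1.le (n := k)
    linarith
  refine Nat.le_induction ?_ ?_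
  · -- base case N = k
    have hGk : runG X k k = runE X k k := by
      simp [runG, Finset.Icc_self]
    rw [hGk, meas_runE hmeas hindep hdist le_rfl, toReal_one_sub_pow hp0.le hp1.le,
      Nat.sub_self]
    norm_num
  · -- step
    intro N hkN IH
    set C : Set Ω := ⋂ j ∈ Finset.Ico (N + 1 - k) (N + 1), {ω | X j ω = true} with hCdef
    have hCmeas : MeasurableSet C := measurableSet_allTrue hmeas _
    have hdiff : runG X k N \ C = runG X k (N + 1) := by
      have h1 : runG X k (N + 1) = runE X k (N + 1) ∩ runG X k N := by
        rw [runG, ← Finset.insert_Icc_right_eq_Icc_add_one (by omega : k ≤ N + 1), Finset.set_biInter_insert]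
        rfl
      rw [h1, runE_compl, Set.diff_eq, Set.inter_comm]
    have hsplit := measure_inter_add_diff (μ := μ) (runG X k N) hCmeas
    have hkey := key_step' hmeas hindep hdist hk hkN
    -- pass to reals
    have hfin : ∀ s : Set Ω, μ s ≠ ⊤ := fun s => measure_ne_top μ s
    have hsplit' : (μ (runG X k N ∩ C)).toReal + (μ (runG X k (N + 1))).toReal
        = (μ (runG X k N)).toReal := by
      rw [← hdiff, ← ENNReal.toReal_add (hfin _) (hfin _), hsplit]
    have hkey' : (μ (runG X k N ∩ C)).toReal ≤ p ^ k * (μ (runG X k N)).toReal := by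
      have h2 := ENNReal.toReal_mono (by
          exact ENNReal.mul_ne_top (by simp [ENNReal.pow_ne_top]) (hfin _)) hkey
      rwa [ENNReal.toReal_mul, ENNReal.toReal_pow, ENNReal.toReal_ofReal hp0.le] at h2
    have hIH' : (1 - p ^ k) ^ (N - k + 1) ≤ (μ (runG X k N)).toReal := IH
    have hexp : N + 1 - k + 1 = (N - k + 1) + 1 := by omega
    rw [hexp, pow_succ]
    have : (1 - p ^ k) ^ (N - k + 1) * (1 - p ^ k) ≤ (μ (runG X k N)).toReal * (1 - p ^ k) :=
      mul_le_mul_of_nonneg_right hIH' h1pk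
    nlinarith [hsplit', hkey', ENNReal.toReal_nonneg (a := μ (runG X k N ∩ C))]

end RunAux

lemma sum_ite_lt_card_iff (s : Finset ℕ) (b : ℕ → Bool) :
    (∑ j ∈ s, if b j = true then 1 else 0) < s.card ↔ ∃ j ∈ s, b j = false := by
  constructor
  · intro h
    by_contra hno
    push_neg at hno
    have hall : ∀ j ∈ s, b j = true := by
      intro j hj
      cases hb : b j with
      | false => exact absurd hb (hno j hj)
      | true => rfl
    rw [Finset.sum_congr rfl (fun j hj => if_pos (hall j hj)), Finset.sum_const,
      smul_eq_mul, mul_one] at h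
    exact lt_irrefl _ h
  · rintro ⟨j, hj, hjf⟩
    calc (∑ j ∈ s, if b j = true then 1 else 0) < ∑ _j ∈ s, 1 := by
          refine Finset.sum_lt_sum (fun i _ => ?_) ⟨j, hj, ?_⟩
          · split_ifs <;> omega
          · rw [hjf]; simp
      _ = s.card := by rw [Finset.sum_const, smul_eq_mul, mul_one]

lemma longestRun_lt_iff_s15 {Y : ℕ → Bool} {n k : ℕ} (hk : 1 ≤ k) (hkn : k ≤ n) :
    longestRun Y n < k ↔ ∀ m ∈ Finset.Icc k n, ∃ j ∈ Finset.Ico (m - k) m, Y j = false := by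
  rw [longestRun, Finset.sup_lt_iff (show (⊥ : ℕ) < k from hk)]
  constructor
  · intro h m hm
    rw [Finset.mem_Icc] at hm
    by_contra hno
    push_neg at hno
    have hall : ∀ j < k, Y (m - k + j) = true := by
      intro j hj
      have hmem : m - k + j ∈ Finset.Ico (m - k) m := Finset.mem_Ico.mpr ⟨by omega, by omega⟩
      cases hb : Y (m - k + j) with
      | false => exact absurd hb (hno _ hmem)
      | true => rfl
    have hcond : ∃ i, i + k ≤ n ∧ ∀ j < k, Y (i + j) = true := ⟨m - k, by omega, hall⟩
    have h2 := h k (Finset.mem_range.mpr (by omega))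
    rw [if_pos hcond] at h2
    exact lt_irrefl k h2
  · intro h ℓ hℓ
    split_ifs with hcond
    · rcases hcond with ⟨i, hin, hrun⟩
      by_contra hge
      push_neg at hge
      have hm : i + k ∈ Finset.Icc k n := Finset.mem_Icc.mpr ⟨by omega, by omega⟩
      obtain ⟨j, hj, hjf⟩ := h _ hm
      rw [Finset.mem_Ico] at hj
      have hjt : Y j = true := by
        have hji : j = i + (j - i) := by omega
        rw [hji]
        exact hrun (j - i) (by omega)
      rw [hjt] at hjf
      exact absurd hjf (by simp)
    · omega

theorem longestRun_cdf_lower_bound_FKG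
    {Ω : Type*} [MeasurableSpace Ω] (μ : Measure Ω) [IsProbabilityMeasure μ]
    (X : ℕ → Ω → Bool) (p : ℝ) (hp0 : 0 < p) (hp1 : p < 1)
    (hmeas : ∀ i, Measurable (X i))
    (hindep : iIndepFun X μ)
    (hdist : ∀ i, μ {ω | X i ω = true} = ENNReal.ofReal p)
    (n k : ℕ) (hk : 1 ≤ k) (hkn : k ≤ n) :
    ((1 - p ^ k) ^ (n - k + 1) =
        ∏ m ∈ Finset.Icc k n,
          (μ {ω | (∑ j ∈ Finset.range m, if X j ω = true then 1 else 0) -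
            (∑ j ∈ Finset.range (m - k), if X j ω = true then 1 else 0) < k}).toReal) ∧
      (∏ m ∈ Finset.Icc k n,
          (μ {ω | (∑ j ∈ Finset.range m, if X j ω = true then 1 else 0) -
            (∑ j ∈ Finset.range (m - k), if X j ω = true then 1 else 0) < k}).toReal) ≤
        (μ {ω | longestRun (fun i => X i ω) n < k}).toReal := by
  have hsetEq : ∀ m ∈ Finset.Icc k n,
      {ω | (∑ j ∈ Finset.range m, if X j ω = true then 1 else 0) -
        (∑ j ∈ Finset.range (m - k), if X j ω = true then 1 else 0) < k} = runE X k m := by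
    intro m hm
    rw [Finset.mem_Icc] at hm
    ext ω
    have hconsec : (∑ j ∈ Finset.range (m - k), if X j ω = true then 1 else 0)
        + (∑ j ∈ Finset.Ico (m - k) m, if X j ω = true then 1 else 0)
        = ∑ j ∈ Finset.range m, if X j ω = true then 1 else 0 := by
      simp only [Finset.range_eq_Ico]
      exact Finset.sum_Ico_consecutive _ (Nat.zero_le _) (by omega)
    have hdiffeq : (∑ j ∈ Finset.range m, if X j ω = true then 1 else 0) -
        (∑ j ∈ Finset.range (m - k), if X j ω = true then 1 else 0)
        = ∑ j ∈ Finset.Ico (m - k) m, if X j ω = true then 1 else 0 := by omega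
    have hcard : (Finset.Ico (m - k) m).card = k := by
      rw [Nat.card_Ico]; omega
    simp only [Set.mem_setOf_eq, hdiffeq, runE]
    have h3 := sum_ite_lt_card_iff (Finset.Ico (m - k) m) (fun j => X j ω)
    rw [hcard] at h3
    exact h3
  have hprod1 : (∏ m ∈ Finset.Icc k n,
      (μ {ω | (∑ j ∈ Finset.range m, if X j ω = true then 1 else 0) -
        (∑ j ∈ Finset.range (m - k), if X j ω = true then 1 else 0) < k}).toReal)
      = (1 - p ^ k) ^ (n - k + 1) := by
    have : ∀ m ∈ Finset.Icc k n,
        (μ {ω | (∑ j ∈ Finset.range m, if X j ω = true then 1 else 0) -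
          (∑ j ∈ Finset.range (m - k), if X j ω = true then 1 else 0) < k}).toReal
          = 1 - p ^ k := by
      intro m hm
      rw [hsetEq m hm, meas_runE hmeas hindep hdist (Finset.mem_Icc.mp hm).1,
        toReal_one_sub_pow hp0.le hp1.le]
    rw [Finset.prod_congr rfl this, Finset.prod_const, Nat.card_Icc]
    congr 1
    omega
  have hLR : {ω | longestRun (fun i => X i ω) n < k} = runG X k n := by
    ext ω
    rw [Set.mem_setOf_eq, longestRun_lt_iff_s15 hk hkn, mem_runG]
  refine ⟨hprod1.symm, ?_⟩
  rw [hprod1, hLR]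
  exact key_bound hp0 hp1 hmeas hindep hdist hk n hkn
end
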